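/- Let w = (1^{a_0}, m_1^{a_1}, …, m_k^{a_k}) be a divisible weight sequence. Then for every r ≥ 1, the degree r·m_k weighted-homogeneous component of S(w) is spanned by products of r weighted-homogeneous elements of degree m_k; equivalently, as submodules of S(w), the r-th power of the degree-m_k weighted-homogeneous component equals the degree r·m_k weighted-homogeneous component. (This expresses that the multiplication map Sym^r(S(w)_{m_k}) → S(w)_{r·m_k} is surjective, i.e., that the line bundle O(m_k) on P(w) is projectively normal, hence very ample.) -/

import Mathlib

/-!
STATEMENT 1: For a divisible weight sequence `w = (1^{a_0}, m_1^{a_1}, …, m_k^{a_k})` and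
every `r ≥ 1`, the `r`-th power of the degree-`m_k` weighted-homogeneous component of `S(w)`
equals the degree `r·m_k` weighted-homogeneous component (projective normality of `O(m_k)`).

The variables of `S(w)` are indexed by pairs `⟨i, j⟩` with `i : Fin (k+1)` and `j : Fin (a i)`,
the variable `x_{i,j}` having weight `m i`.
-/

open MvPolynomial

/-- Extraction lemma: if all weights occurring in `e` divide `t` and the weights are
totally ordered by divisibility, and `t ≤ weight e`, then one can extract a sub-exponent
vector of weight exactly `t`. -/
lemma extract_subweight {σ : Type*} (W : σ → ℕ)
    (hchain : ∀ s s' : σ, W s ∣ W s' ∨ W s' ∣ W s) :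
    ∀ t (e : σ →₀ ℕ), (∀ s ∈ e.support, W s ∣ t) → t ≤ Finsupp.weight W e →
    ∃ f : σ →₀ ℕ, f ≤ e ∧ Finsupp.weight W f = t := by
  intro t
  induction t using Nat.strong_induction_on with
  | _ t ih =>
  intro e hD hT
  rcases Nat.eq_zero_or_pos t with rfl | ht
  · exact ⟨0, zero_le, map_zero _⟩
  · have hsupp : e.support.Nonempty := by
      rw [Finset.nonempty_iff_ne_empty]
      intro h
      have : e = 0 := Finsupp.support_eq_empty.mp h
      rw [this, map_zero] at hT
      omega
    obtain ⟨s, hs, hmax⟩ := e.support.exists_max_image W hsupp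
    have hWs_dvd : W s ∣ t := hD s hs
    have hWs_pos : 0 < W s := Nat.pos_of_dvd_of_pos hWs_dvd ht
    have hWs_le : W s ≤ t := Nat.le_of_dvd ht hWs_dvd
    have hsingle_le : Finsupp.single s 1 ≤ e :=
      Finsupp.single_le_iff.mpr (Nat.one_le_iff_ne_zero.mpr (Finsupp.mem_support_iff.mp hs))
    have he' : (e - Finsupp.single s 1) + Finsupp.single s 1 = e :=
      tsub_add_cancel_of_le hsingle_le
    have hwsingle : Finsupp.weight W (Finsupp.single s 1) = W s := by
      simp [Finsupp.weight_apply, Finsupp.sum_single_index]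
    have hwe' : Finsupp.weight W (e - Finsupp.single s 1) + W s = Finsupp.weight W e := by
      rw [← hwsingle, ← map_add, he']
    have hD' : ∀ s' ∈ (e - Finsupp.single s 1).support, W s' ∣ t - W s := by
      intro s' hs'
      have hs'e : s' ∈ e.support := Finsupp.support_tsub hs'
      have hdt : W s' ∣ t := hD s' hs'e
      have hle : W s' ≤ W s := hmax s' hs'e
      have hds : W s' ∣ W s := by
        rcases hchain s' s with h | h
        · exact h
        · have : W s ≤ W s' := Nat.le_of_dvd (Nat.pos_of_dvd_of_pos hdt ht) h
          have : W s' = W s := le_antisymm hle this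
          rw [this]
      exact Nat.dvd_sub hdt hds
    have hT' : t - W s ≤ Finsupp.weight W (e - Finsupp.single s 1) := by omega
    obtain ⟨f', hf'le, hf'w⟩ := ih (t - W s) (by omega) (e - Finsupp.single s 1) hD' hT'
    refine ⟨f' + Finsupp.single s 1, ?_, ?_⟩
    · calc f' + Finsupp.single s 1 ≤ (e - Finsupp.single s 1) + Finsupp.single s 1 :=
            add_le_add_left hf'le _
        _ = e := he'
    · rw [map_add, hf'w, hwsingle]; omega

theorem stmt1 (K : Type) [Field K] [IsAlgClosed K]
    (k : ℕ) (m a : ℕ → ℕ)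
    (hm0 : m 0 = 1) (ha0 : 2 ≤ a 0) (ha : ∀ i, 1 ≤ i → i ≤ k → 1 ≤ a i)
    (hmono : ∀ i, i < k → m i < m (i + 1)) (hdvd : ∀ i, i < k → m i ∣ m (i + 1))
    (r : ℕ) (hr : 1 ≤ r) :
    (weightedHomogeneousSubmodule K
        (fun p : Σ i : Fin (k + 1), Fin (a i.1) => m p.1.1) (m k)) ^ r =
      weightedHomogeneousSubmodule K
        (fun p : Σ i : Fin (k + 1), Fin (a i.1) => m p.1.1) (r * m k) := by
  set σ := Σ i : Fin (k + 1), Fin (a i.1)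
  set W : σ → ℕ := fun p => m p.1.1 with hW
  -- divisibility of the weight sequence
  have hmdvd : ∀ i j : ℕ, i ≤ j → j ≤ k → m i ∣ m j := by
    intro i j hij hjk
    induction j with
    | zero => simp [Nat.le_zero.mp hij]
    | succ n ihn =>
      rcases Nat.lt_or_ge i (n + 1) with h | h
      · exact dvd_trans (ihn (by omega) (by omega)) (hdvd n (by omega))
      · have : i = n + 1 := by omega
        simp [this]
    -- positivity
  have hmpos : ∀ i : ℕ, i ≤ k → 0 < m i := by
    intro i hik
    induction i with
    | zero => omega
    | succ n ihn => exact lt_trans (ihn (by omega)) (hmono n (by omega))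
  have hchain : ∀ s s' : σ, W s ∣ W s' ∨ W s' ∣ W s := by
    intro s s'
    rcases le_total s.1.1 s'.1.1 with h | h
    · exact Or.inl (hmdvd _ _ h (Nat.lt_succ_iff.mp s'.1.isLt))
    · exact Or.inr (hmdvd _ _ h (Nat.lt_succ_iff.mp s.1.isLt))
  induction r, hr using Nat.le_induction with
  | base => simp
  | succ r hr ih =>
    apply le_antisymm
    · rw [pow_succ, ih]
      apply Submodule.mul_le.mpr
      intro x hx y hy
      rw [mem_weightedHomogeneousSubmodule] at hx hy ⊢
      have := hx.mul hy
      have heq : r * m k + m k = (r + 1) * m k := by ring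
      rwa [heq] at this
    · intro p hp
      rw [mem_weightedHomogeneousSubmodule] at hp
      rw [← support_sum_monomial_coeff p]
      apply Submodule.sum_mem
      intro d hd
      have hdw : Finsupp.weight W d = (r + 1) * m k := hp (mem_support_iff.mp hd)
      have hD : ∀ s ∈ d.support, W s ∣ m k := fun s _ => hmdvd _ _ (Nat.lt_succ_iff.mp s.1.isLt) le_rfl
      have hT : m k ≤ Finsupp.weight W d := by
        rw [hdw]
        calc m k = 1 * m k := (one_mul _).symm
          _ ≤ (r + 1) * m k := Nat.mul_le_mul_right _ (by omega)
      obtain ⟨f, hfle, hfw⟩ := extract_subweight W hchain (m k) d hD hT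
      have hsplit : Finsupp.weight W (d - f) + Finsupp.weight W f = Finsupp.weight W d := by
        rw [← map_add, tsub_add_cancel_of_le hfle]
      have hmono' : monomial d (coeff d p) = monomial (d - f) (coeff d p) * monomial f 1 := by
        rw [monomial_mul, mul_one, tsub_add_cancel_of_le hfle]
      rw [hmono', pow_succ]
      apply Submodule.mul_mem_mul
      · rw [ih, mem_weightedHomogeneousSubmodule]
        have hx : (r + 1) * m k = r * m k + m k := by ring
        exact isWeightedHomogeneous_monomial _ _ _ (by omega)
      · rw [mem_weightedHomogeneousSubmodule]
        exact isWeightedHomogeneous_monomial _ _ _ hfw
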